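/- Let k be a field of characteristic p, G a finite p-group, and N ⊴ G such that γ_i^G(N) ⊆ D_i(N) for every i ≥ 2, where γ^G denotes the relative lower central series and D_i(N) the Jennings series of N. Then for every n ≥ 1 the ideal J_n(N,G) equals I(N)^n·I(G). -/

import Mathlib

set_option maxHeartbeats 1600000

open scoped commutatorElement

/-- The Jennings (Brauer–Jennings–Zassenhaus) series of a group:
`D_n(G) = ∏_{i p^j ≥ n} γ_i(G)^{p^j}` (here `γ_{i+1}(G) = lowerCentralSeries G i`). -/
def jennings (p : ℕ) (G : Type*) [Group G] (n : ℕ) : Subgroup G :=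
  ⨆ (i : ℕ) (j : ℕ) (_ : n ≤ (i + 1) * p ^ j),
    Subgroup.closure {x : G | ∃ y ∈ (⊤ : Subgroup G).lowerCentralSeries i, x = y ^ p ^ j}

/-- The relative lower central series: `γ_1^G(N) = G`, `γ_{n+1}^G(N) = [γ_n^G(N), N]`.
Here `gammaRel N i` is `γ_{i+1}^G(N)`. -/
def gammaRel {G : Type*} [Group G] (N : Subgroup G) : ℕ → Subgroup G
  | 0 => ⊤
  | n + 1 => ⁅gammaRel N n, N⁆

/-- The ideals `J_n(N,G)`: `J_1 = I(N)·I(G)`, `J_{n+1} = I(N)·J_n + J_n·I(N)`.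
Here `Jrel IN IG n` is `J_{n+1}`. -/
def Jrel {k R : Type*} [CommSemiring k] [Semiring R] [Algebra k R]
    (IN IG : Submodule k R) : ℕ → Submodule k R
  | 0 => IN * IG
  | n + 1 => IN * Jrel IN IG n + Jrel IN IG n * IN

section Aux

variable {k : Type*} [Field k] {G : Type*} [Group G] {N : Subgroup G}

local notation "of'" => MonoidAlgebra.of k G

/-- The span of `{h - 1 : h ∈ N}` inside `k[G]`. -/
noncomputable def augI (N : Subgroup G) : Submodule k (MonoidAlgebra k G) :=
  Submodule.span k {z : MonoidAlgebra k G | ∃ h ∈ N, z = MonoidAlgebra.of k G h - 1}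

lemma mem_augI {h : G} (hh : h ∈ N) : of' h - 1 ∈ (augI N : Submodule k (MonoidAlgebra k G)) :=
  Submodule.subset_span ⟨h, hh, rfl⟩

lemma augI_mul_augI : augI N * augI N ≤ (augI N : Submodule k (MonoidAlgebra k G)) := by
  rw [augI, Submodule.span_mul_span, Submodule.span_le]
  rintro _ ⟨x, ⟨a, ha, rfl⟩, y, ⟨b, hb, rfl⟩, rfl⟩
  have key : (of' a - 1) * (of' b - 1)
      = (of' (a * b) - 1) - (of' a - 1) - (of' b - 1) := by
    rw [map_mul]; noncomm_ring
  show (of' a - 1) * (of' b - 1) ∈ augI N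
  rw [key]
  exact sub_mem (sub_mem (mem_augI (mul_mem ha hb)) (mem_augI ha)) (mem_augI hb)

lemma augI_pow_succ_le (m : ℕ) (hm : 1 ≤ m) :
    (augI N : Submodule k (MonoidAlgebra k G)) ^ (m + 1) ≤ augI N ^ m := by
  obtain ⟨t, rfl⟩ : ∃ t, m = t + 1 := ⟨m - 1, (Nat.succ_pred_eq_of_pos hm).symm⟩
  calc augI N ^ (t + 1 + 1) = augI N ^ t * (augI N * augI N) := by
        rw [pow_succ, pow_succ, mul_assoc]
    _ ≤ augI N ^ t * augI N := mul_le_mul_right augI_mul_augI _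
    _ = augI N ^ (t + 1) := (pow_succ _ _).symm

lemma augI_pow_antitone {a b : ℕ} (ha : 1 ≤ a) (hab : a ≤ b) :
    (augI N : Submodule k (MonoidAlgebra k G)) ^ b ≤ augI N ^ a := by
  induction b, hab using Nat.le_induction with
  | base => exact le_rfl
  | succ b hab ih => exact le_trans (augI_pow_succ_le b (le_trans ha hab)) ih

lemma mem_augI_pow_mul_of {n : G} (hn : n ∈ N) (m : ℕ) (hm : 1 ≤ m)
    {x : MonoidAlgebra k G} (hx : x ∈ (augI N : Submodule k (MonoidAlgebra k G)) ^ m) :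
    x * of' n ∈ (augI N : Submodule k (MonoidAlgebra k G)) ^ m := by
  have : x * of' n = x * (of' n - 1) + x := by noncomm_ring
  rw [this]
  refine add_mem (augI_pow_succ_le m hm ?_) hx
  rw [pow_succ]
  exact Submodule.mul_mem_mul hx (mem_augI hn)

variable (N) in
/-- The `n`-th dimension subgroup of `N` inside `k[G]`. -/
def dimSub (n : ℕ) (hn : 1 ≤ n) : Subgroup ↥N where
  carrier := {x | of' (↑x) - 1 ∈ augI N ^ n}
  one_mem' := by
    show of' ((1 : ↥N) : G) - 1 ∈ augI N ^ n
    rw [OneMemClass.coe_one, map_one, sub_self]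
    exact zero_mem _
  mul_mem' := by
    intro a b ha hb
    show of' ((a * b : ↥N) : G) - 1 ∈ augI N ^ n
    have key : of' ((a * b : ↥N) : G) - 1
        = (of' ↑a - 1) * (of' ↑b - 1) + (of' ↑a - 1) + (of' ↑b - 1) := by
      rw [Subgroup.coe_mul, map_mul]; noncomm_ring
    rw [key]
    refine add_mem (add_mem ?_ ?_) hb
    · refine augI_pow_succ_le n hn ?_
      rw [pow_succ]
      exact Submodule.mul_mem_mul ha (mem_augI b.2)
    · exact ha
  inv_mem' := by
    intro a ha
    show of' ((a⁻¹ : ↥N) : G) - 1 ∈ augI N ^ n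
    have h1 : of' ↑a * of' ((a⁻¹ : ↥N) : G) = 1 := by
      rw [← map_mul, Subgroup.coe_inv, mul_inv_cancel, map_one]
    have key : of' ((a⁻¹ : ↥N) : G) - 1
        = -(of' (↑a : G) - 1) - (of' (↑a : G) - 1) * (of' ((a⁻¹ : ↥N) : G) - 1) := by
      have expand : -(of' (↑a : G) - 1) - (of' (↑a : G) - 1) * (of' ((a⁻¹ : ↥N) : G) - 1)
          = of' ((a⁻¹ : ↥N) : G) - 1 - (of' (↑a : G) * of' ((a⁻¹ : ↥N) : G) - 1) := by
        noncomm_ring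
      rw [expand, h1, sub_self, sub_zero]
    rw [key]
    refine sub_mem (neg_mem ha) (augI_pow_succ_le n hn ?_)
    rw [pow_succ]
    exact Submodule.mul_mem_mul ha (mem_augI (inv_mem a.2))

lemma mem_dimSub {n : ℕ} {hn : 1 ≤ n} {x : ↥N} :
    x ∈ dimSub (k := k) N n hn ↔
      of' (↑x : G) - 1 ∈ (augI N : Submodule k (MonoidAlgebra k G)) ^ n := Iff.rfl

lemma lcs_sub (i : ℕ) : ∀ y : ↥N, y ∈ (⊤ : Subgroup ↥N).lowerCentralSeries i →
    of' (↑y) - 1 ∈ (augI N : Submodule k (MonoidAlgebra k G)) ^ (i + 1) := by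
  induction i with
  | zero =>
    intro y _
    simpa only [zero_add, pow_one] using mem_augI (k := k) y.2
  | succ i ih =>
    have : (⊤ : Subgroup ↥N).lowerCentralSeries (i + 1) ≤ dimSub (k := k) N (i + 2) (by omega) := by
      rw [Subgroup.lowerCentralSeries_succ]
      refine (Subgroup.closure_le _).2 ?_
      rintro x ⟨a, ha, b, -, rfl⟩
      show of' (↑⁅a, b⁆) - 1 ∈ augI N ^ (i + 2)
      set A := of' (↑a : G)
      set B := of' (↑b : G)
      have e1 : (A - 1) * (B - 1) - (B - 1) * (A - 1) = A * B - B * A := by noncomm_ring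
      have e2 : (A * B - B * A) * of' ((↑b * ↑a : G)⁻¹) = of' (↑⁅a, b⁆) - 1 := by
        rw [sub_mul, ← map_mul, ← map_mul, ← map_mul, ← map_mul, mul_inv_cancel]
        congr 2
        rw [commutatorElement_def, Subgroup.coe_mul, Subgroup.coe_mul, Subgroup.coe_mul,
          Subgroup.coe_inv, Subgroup.coe_inv]
        group
      rw [← e2, ← e1]
      refine mem_augI_pow_mul_of (inv_mem (mul_mem b.2 a.2)) (i + 2) (by omega) ?_
      refine sub_mem ?_ ?_
      · rw [pow_succ]
        exact Submodule.mul_mem_mul (ih a ha) (mem_augI b.2)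
      · rw [pow_succ']
        exact Submodule.mul_mem_mul (mem_augI b.2) (ih a ha)
    intro y hy
    exact this hy

lemma jennings_le {p : ℕ} (hp : p.Prime) [CharP k p] (n : ℕ) (hn : 1 ≤ n) :
    ∀ x : ↥N, x ∈ jennings p ↥N n →
      of' ↑x - 1 ∈ (augI N : Submodule k (MonoidAlgebra k G)) ^ n := by
  haveI : Fact p.Prime := ⟨hp⟩
  haveI : CharP (MonoidAlgebra k G) p :=
    charP_of_injective_algebraMap (algebraMap k (MonoidAlgebra k G)).injective p
  suffices h : jennings p ↥N n ≤ dimSub (k := k) N n hn by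
    intro x hx
    exact mem_dimSub.1 (h hx)
  refine iSup_le fun i => iSup_le fun j => iSup_le fun hij => (Subgroup.closure_le _).2 ?_
  rintro x ⟨y, hy, rfl⟩
  rw [SetLike.mem_coe, mem_dimSub]
  have coe_pow : ((y ^ p ^ j : ↥N) : G) = (↑y : G) ^ p ^ j := rfl
  rw [coe_pow, map_pow]
  have : (of' ↑y) ^ p ^ j - 1 = (of' ↑y - 1) ^ p ^ j := by
    rw [sub_pow_char_pow_of_commute _ _ (Commute.one_right _), one_pow]
  rw [this]
  refine augI_pow_antitone hn hij ?_
  rw [pow_mul]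
  exact Submodule.pow_mem_pow _ (lcs_sub i y hy) _

end Aux

/-- If `γ_i^G(N) ⊆ D_i(N)` for every `i ≥ 2`, then
`J_n(N,G) = I(N)^n·I(G)` for every `n ≥ 1`. -/
theorem Jrel_eq_pow_mul_aug (p : ℕ) (hp : p.Prime) (k : Type*) [Field k] [CharP k p]
    (G : Type*) [Group G] [Finite G] (hG : ∃ s : ℕ, Nat.card G = p ^ s)
    (N : Subgroup G) [N.Normal]
    (hγ : ∀ i : ℕ, 2 ≤ i → gammaRel N (i - 1) ≤ (jennings p ↥N i).map N.subtype) :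
    ∀ n : ℕ, 1 ≤ n →
      Jrel (Submodule.span k {z : MonoidAlgebra k G | ∃ h ∈ N, z = MonoidAlgebra.of k G h - 1})
          (Submodule.span k {z : MonoidAlgebra k G | ∃ h : G, z = MonoidAlgebra.of k G h - 1})
          (n - 1) =
        (Submodule.span k
            {z : MonoidAlgebra k G | ∃ h ∈ N, z = MonoidAlgebra.of k G h - 1}) ^ n *
          Submodule.span k {z : MonoidAlgebra k G | ∃ h : G, z = MonoidAlgebra.of k G h - 1} := by
  set IG : Submodule k (MonoidAlgebra k G) :=
    Submodule.span k {z : MonoidAlgebra k G | ∃ h : G, z = MonoidAlgebra.of k G h - 1} with hIG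
  set IN : Submodule k (MonoidAlgebra k G) := augI N with hIN
  have mem_IG : ∀ g : G, MonoidAlgebra.of k G g - 1 ∈ IG := fun g =>
    Submodule.subset_span ⟨g, rfl⟩
  have hNG : IN ≤ IG := by
    rw [hIN, augI, Submodule.span_le]
    rintro _ ⟨h, -, rfl⟩
    exact mem_IG h
  -- commutators of G with N land in IN^2
  have hcomm : ∀ g : G, ∀ h ∈ N, MonoidAlgebra.of k G ⁅g, h⁆ - 1 ∈ IN ^ 2 := by
    intro g h hh
    have hmem : ⁅g, h⁆ ∈ gammaRel N 1 :=
      Subgroup.commutator_mem_commutator (Subgroup.mem_top g) hh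
    have h2 := hγ 2 le_rfl hmem
    obtain ⟨x, hx, hxe⟩ := h2
    have : N.subtype x = (↑x : G) := rfl
    rw [← hxe, this]
    exact jennings_le hp 2 one_le_two x hx
  -- the key sandwich inequality
  have key : IG * IN ≤ IN * IG + IN ^ 2 := by
    rw [hIG, hIN, augI, Submodule.span_mul_span, Submodule.span_le]
    rintro _ ⟨x, ⟨g, rfl⟩, y, ⟨h, hh, rfl⟩, rfl⟩
    show (MonoidAlgebra.of k G g - 1) * (MonoidAlgebra.of k G h - 1) ∈ IN * IG + IN ^ 2
    set A := MonoidAlgebra.of k G g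
    set B := MonoidAlgebra.of k G h
    set H := MonoidAlgebra.of k G (g * h * g⁻¹)
    set C := MonoidAlgebra.of k G ⁅g, h⁆
    have e1 : H * A = A * B := by
      rw [← map_mul, ← map_mul]
      congr 1
      group
    have e2 : C * B = H := by
      rw [← map_mul]
      congr 1
      rw [commutatorElement_def]
      group
    have iden : (A - 1) * (B - 1) = (H - 1) * (A - 1) + (C - 1) * B := by
      have expand : (H - 1) * (A - 1) + (C - 1) * B
          = H * A - H - A + 1 + C * B - B := by noncomm_ring
      rw [expand, e1, e2]
      noncomm_ring
    rw [iden]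
    refine add_mem (Submodule.mem_sup_left ?_) (Submodule.mem_sup_right ?_)
    · exact Submodule.mul_mem_mul
        (mem_augI (Subgroup.Normal.conj_mem ‹N.Normal› h hh g)) (mem_IG g)
    · exact mem_augI_pow_mul_of hh 2 one_le_two (hcomm g h hh)
  -- the main induction
  have main : ∀ m : ℕ, Jrel IN IG m = IN ^ (m + 1) * IG := by
    intro m
    induction m with
    | zero =>
      show IN * IG = IN ^ 1 * IG
      rw [pow_one]
    | succ m ih =>
      show IN * Jrel IN IG m + Jrel IN IG m * IN = IN ^ (m + 2) * IG
      rw [ih]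
      refine le_antisymm (sup_le ?_ ?_) ?_
      · rw [← mul_assoc, ← pow_succ']
      · calc IN ^ (m + 1) * IG * IN = IN ^ (m + 1) * (IG * IN) := mul_assoc _ _ _
          _ ≤ IN ^ (m + 1) * (IN * IG + IN ^ 2) := mul_le_mul_right key _
          _ = IN ^ (m + 1) * (IN * IG) ⊔ IN ^ (m + 1) * IN ^ 2 := Submodule.mul_sup _ _ _
          _ ≤ IN ^ (m + 2) * IG := by
            refine sup_le ?_ ?_
            · rw [← mul_assoc, ← pow_succ]
            · rw [← pow_add]
              have : IN ^ (m + 1 + 2) = IN ^ (m + 2) * IN := by rw [← pow_succ]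
              rw [this]
              exact mul_le_mul_right hNG _
      · have : IN ^ (m + 2) * IG = IN * (IN ^ (m + 1) * IG) := by
          rw [← mul_assoc, ← pow_succ']
        rw [this]
        exact le_sup_left
  intro n hn
  have := main (n - 1)
  rwa [Nat.sub_add_cancel hn] at this
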